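/- For any positive integers k and b, there exists a finite simple graph G with no isolated vertices such that both b_t^k(G) and b_t^{k+1}(G) exist and b_t^{k+1}(G) = b_t^k(G) + b. -/

import Mathlib

open SimpleGraph

/-- A set `S` of vertices is a total dominating set of `G` if every vertex of `G`
is adjacent to at least one vertex of `S`. -/
def IsTotalDominatingSet {V : Type*} (G : SimpleGraph V) (S : Set V) : Prop :=
  ∀ v : V, ∃ u ∈ S, G.Adj v u

/-- The total domination number of `G`: the minimum cardinality of a total
dominating set of `G`. -/
noncomputable def totalDominationNumber {V : Type*} (G : SimpleGraph V) : ℕ :=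
  sInf {n : ℕ | ∃ S : Set V, S.ncard = n ∧ IsTotalDominatingSet G S}

/-- A graph has no isolated vertices if every vertex has a neighbor. -/
def NoIsolatedVerts {V : Type*} (G : SimpleGraph V) : Prop :=
  ∀ v : V, ∃ u : V, G.Adj v u

/-- The `k`-total bondage number of `G`: the minimum cardinality of a set `F` of
edges of `G` such that `G − F` has no isolated vertices and the total domination
number of `G − F` is at least `γ_t(G) + k`. -/
noncomputable def kTotalBondage {V : Type*} (G : SimpleGraph V) (k : ℕ) : ℕ :=
  sInf {m : ℕ | ∃ F : Set (Sym2 V), F ⊆ G.edgeSet ∧ F.ncard = m ∧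
    NoIsolatedVerts (G.deleteEdges F) ∧
    totalDominationNumber G + k ≤ totalDominationNumber (G.deleteEdges F)}


inductive Wt (b : ℕ) : Type
  | U | Vv | LU | LV | W (j : Fin b)
  deriving DecidableEq, Fintype

open Wt in
def adjW {b : ℕ} : Wt b → Wt b → Prop
  | U, Vv | Vv, U | U, LU | LU, U | Vv, LV | LV, Vv
  | U, W _ | W _, U | Vv, W _ | W _, Vv => True
  | _, _ => False

def Gr (k b : ℕ) : SimpleGraph (Fin k × Wt b) where
  Adj p q := p.1 = q.1 ∧ adjW p.2 q.2
  symm := by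
    constructor
    rintro ⟨i, x⟩ ⟨i', y⟩ ⟨h1, h2⟩
    exact ⟨h1.symm, by cases x <;> cases y <;> simp_all [adjW]⟩
  loopless := by
    constructor
    rintro ⟨i, x⟩ ⟨-, h⟩
    cases x <;> simp [adjW] at h

variable {k b : ℕ}

lemma adjW_lu_right {y : Wt b} (h : adjW Wt.LU y) : y = Wt.U := by
  cases y <;> simp_all [adjW]
lemma adjW_lv_right {y : Wt b} (h : adjW Wt.LV y) : y = Wt.Vv := by
  cases y <;> simp_all [adjW]
lemma adjW_w_right {j : Fin b} {y : Wt b} (h : adjW (Wt.W j) y) : y = Wt.U ∨ y = Wt.Vv := by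
  cases y <;> simp_all [adjW]
lemma adjW_u_right {y : Wt b} (h : adjW Wt.U y) :
    y = Wt.Vv ∨ y = Wt.LU ∨ ∃ j, y = Wt.W j := by
  cases y <;> simp_all [adjW]
lemma adjW_v_right {y : Wt b} (h : adjW Wt.Vv y) :
    y = Wt.U ∨ y = Wt.LV ∨ ∃ j, y = Wt.W j := by
  cases y <;> simp_all [adjW]

lemma ncard_eq_sum_fiberwise {γ α : Type*} [Fintype α] [DecidableEq α]
    (S : Set γ) (hS : S.Finite) (f : γ → α) :
    S.ncard = ∑ i : α, (S ∩ f ⁻¹' {i}).ncard := by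
  classical
  rw [Set.ncard_eq_toFinset_card S hS,
    Finset.card_eq_sum_card_fiberwise (f := f) (t := Finset.univ) (fun x _ => Finset.mem_univ _)]
  refine Finset.sum_congr rfl fun i _ => ?_
  rw [Set.ncard_eq_toFinset_card _ (hS.inter_of_left _)]
  congr 1
  ext x
  simp [Set.Finite.mem_toFinset, Finset.mem_filter, and_comm]

lemma ncard_range_of_injective {α β : Type*} [Fintype α] {f : α → β}
    (hf : Function.Injective f) : (Set.range f).ncard = Fintype.card α := by
  rw [← Set.image_univ, Set.ncard_image_of_injective _ hf, Set.ncard_univ,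
    Nat.card_eq_fintype_card]

lemma ncard_fst_fiber {α β : Type*} (S : Set (α × β)) (i : α) :
    (S ∩ Prod.fst ⁻¹' {i}).ncard = {x : β | (i, x) ∈ S}.ncard := by
  rw [show S ∩ Prod.fst ⁻¹' {i} = (fun x : β => (i, x)) '' {x : β | (i, x) ∈ S} by
    ext ⟨a, c⟩
    simp only [Set.mem_inter_iff, Set.mem_preimage, Set.mem_singleton_iff, Set.mem_image,
      Set.mem_setOf_eq, Prod.mk.injEq]
    constructor
    · rintro ⟨h, rfl⟩; exact ⟨c, h, rfl, rfl⟩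
    · rintro ⟨x, h, rfl, rfl⟩; exact ⟨h, rfl⟩]
  exact Set.ncard_image_of_injective _ (fun x y h => (Prod.mk.injEq ..).mp h |>.2)

lemma ncard_fibers (S : Set (Fin k × Wt b)) :
    S.ncard = ∑ i : Fin k, {x : Wt b | (i, x) ∈ S}.ncard := by
  rw [ncard_eq_sum_fiberwise S (Set.toFinite S) Prod.fst]
  exact Finset.sum_congr rfl fun i _ => ncard_fst_fiber S i

def Sbase (k b : ℕ) : Set (Fin k × Wt b) := {p | p.2 = Wt.U ∨ p.2 = Wt.Vv}

lemma sbase_tds : IsTotalDominatingSet (Gr k b) (Sbase k b) := by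
  rintro ⟨i, x⟩
  cases x with
  | U => exact ⟨(i, Wt.Vv), Or.inr rfl, rfl, trivial⟩
  | Vv => exact ⟨(i, Wt.U), Or.inl rfl, rfl, trivial⟩
  | LU => exact ⟨(i, Wt.U), Or.inl rfl, rfl, trivial⟩
  | LV => exact ⟨(i, Wt.Vv), Or.inr rfl, rfl, trivial⟩
  | W j => exact ⟨(i, Wt.U), Or.inl rfl, rfl, trivial⟩

lemma sbase_ncard : (Sbase k b).ncard = 2 * k := by
  rw [ncard_fibers]
  have : ∀ i : Fin k, {x : Wt b | (i, x) ∈ Sbase k b} = {Wt.U, Wt.Vv} := by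
    intro i; ext x; simp [Sbase, Set.mem_insert_iff]
  simp only [this]
  rw [Set.ncard_pair (by intro h; exact nomatch h)]
  simp [mul_comm]

/-- membership lower-bound helper -/
lemma tdn_le {V : Type*} (G : SimpleGraph V) {S : Set V}
    (h : IsTotalDominatingSet G S) : totalDominationNumber G ≤ S.ncard :=
  Nat.sInf_le ⟨S, rfl, h⟩

lemma le_tdn {V : Type*} [Fintype V] (G : SimpleGraph V) (hni : NoIsolatedVerts G) {n : ℕ}
    (h : ∀ S : Set V, IsTotalDominatingSet G S → n ≤ S.ncard) :
    n ≤ totalDominationNumber G := by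
  refine le_csInf ⟨Set.univ.ncard, Set.univ, rfl, fun v => ?_⟩ ?_
  · obtain ⟨u, hu⟩ := hni v
    exact ⟨u, Set.mem_univ u, hu⟩
  · rintro m ⟨S, rfl, hS⟩
    exact h S hS

lemma uv_mem_of_tds {G' : SimpleGraph (Fin k × Wt b)} (hle : G' ≤ Gr k b) {S : Set (Fin k × Wt b)}
    (hS : IsTotalDominatingSet G' S) (i : Fin k) : (i, Wt.U) ∈ S ∧ (i, Wt.Vv) ∈ S := by
  constructor
  · obtain ⟨q, hqS, hadj⟩ := hS (i, Wt.LU)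
    obtain ⟨h1, h2⟩ := hle hadj
    obtain ⟨i', y⟩ := q
    cases h1
    have : y = Wt.U := adjW_lu_right h2
    subst this; exact hqS
  · obtain ⟨q, hqS, hadj⟩ := hS (i, Wt.LV)
    obtain ⟨h1, h2⟩ := hle hadj
    obtain ⟨i', y⟩ := q
    cases h1
    have : y = Wt.Vv := adjW_lv_right h2
    subst this; exact hqS

lemma gr_no_isolated : NoIsolatedVerts (Gr k b) := by
  rintro ⟨i, x⟩
  cases x with
  | U => exact ⟨(i, Wt.Vv), rfl, trivial⟩
  | Vv => exact ⟨(i, Wt.U), rfl, trivial⟩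
  | LU => exact ⟨(i, Wt.U), rfl, trivial⟩
  | LV => exact ⟨(i, Wt.Vv), rfl, trivial⟩
  | W j => exact ⟨(i, Wt.U), rfl, trivial⟩

lemma tdn_gr : totalDominationNumber (Gr k b) = 2 * k := by
  refine le_antisymm (sbase_ncard ▸ tdn_le _ sbase_tds) ?_
  refine le_tdn _ gr_no_isolated ?_
  · intro S hS
    have hsub : Sbase k b ⊆ S := by
      rintro ⟨i, x⟩ hx
      rcases hx with h | h <;> (cases h)
      · exact (uv_mem_of_tds le_rfl hS i).1
      · exact (uv_mem_of_tds le_rfl hS i).2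
    calc 2 * k = (Sbase k b).ncard := sbase_ncard.symm
      _ ≤ S.ncard := Set.ncard_le_ncard hsub (Set.toFinite S)

open Classical in
noncomputable section

def uvE (i : Fin k) : Sym2 (Fin k × Wt b) := s((i, Wt.U), (i, Wt.Vv))
def uwE (i : Fin k) (j : Fin b) : Sym2 (Fin k × Wt b) := s((i, Wt.U), (i, Wt.W j))
def vwE (i : Fin k) (j : Fin b) : Sym2 (Fin k × Wt b) := s((i, Wt.Vv), (i, Wt.W j))

open Classical in
noncomputable def Aset (F : Set (Sym2 (Fin k × Wt b))) : Finset (Fin k) :=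
  Finset.univ.filter fun i => uvE i ∈ F

open Classical in
noncomputable def Bset (F : Set (Sym2 (Fin k × Wt b))) : Finset (Fin k) :=
  Finset.univ.filter fun i => ∀ j, uwE i j ∈ F ∨ vwE i j ∈ F

end

variable {F : Set (Sym2 (Fin k × Wt b))}

lemma mem_Aset {i : Fin k} : i ∈ Aset (b := b) F ↔ uvE i ∈ F := by
  simp [Aset]

lemma mem_Bset {i : Fin k} : i ∈ Bset (k := k) F ↔ ∀ j, uwE i j ∈ F ∨ vwE i j ∈ F := by
  simp [Bset]

lemma keyLU (hni : NoIsolatedVerts ((Gr k b).deleteEdges F)) (i : Fin k) :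
    ((Gr k b).deleteEdges F).Adj (i, Wt.LU) (i, Wt.U) := by
  obtain ⟨q, hq⟩ := hni (i, Wt.LU)
  obtain ⟨⟨hfst, hw⟩, -⟩ := (SimpleGraph.deleteEdges_adj ..).mp hq
  obtain ⟨i', y⟩ := q
  cases hfst
  have : y = Wt.U := adjW_lu_right hw
  subst this; exact hq

lemma keyLV (hni : NoIsolatedVerts ((Gr k b).deleteEdges F)) (i : Fin k) :
    ((Gr k b).deleteEdges F).Adj (i, Wt.LV) (i, Wt.Vv) := by
  obtain ⟨q, hq⟩ := hni (i, Wt.LV)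
  obtain ⟨⟨hfst, hw⟩, -⟩ := (SimpleGraph.deleteEdges_adj ..).mp hq
  obtain ⟨i', y⟩ := q
  cases hfst
  have : y = Wt.Vv := adjW_lv_right hw
  subst this; exact hq

lemma keyW (hni : NoIsolatedVerts ((Gr k b).deleteEdges F)) (i : Fin k) (j : Fin b) :
    ((Gr k b).deleteEdges F).Adj (i, Wt.W j) (i, Wt.U) ∨
      ((Gr k b).deleteEdges F).Adj (i, Wt.W j) (i, Wt.Vv) := by
  obtain ⟨q, hq⟩ := hni (i, Wt.W j)
  obtain ⟨⟨hfst, hw⟩, -⟩ := (SimpleGraph.deleteEdges_adj ..).mp hq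
  obtain ⟨i', y⟩ := q
  cases hfst
  rcases adjW_w_right hw with h | h <;> subst h
  · exact Or.inl hq
  · exact Or.inr hq

open Classical in
lemma tdn_delete_le (hni : NoIsolatedVerts ((Gr k b).deleteEdges F)) :
    totalDominationNumber ((Gr k b).deleteEdges F) ≤
      2 * k + ((Aset F).card + (Aset F ∩ Bset (k := k) F).card) := by
  choose nb hnb using hni
  set H := (Gr k b).deleteEdges F with hH
  -- the extra part of the dominating set in copy i
  set Ext : Fin k → Set (Wt b) := fun i =>
    if uvE i ∈ F then
      (if h : ∃ j, uwE i j ∉ F ∧ vwE i j ∉ F then {Wt.W h.choose}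
       else {(nb (i, Wt.U)).2, (nb (i, Wt.Vv)).2})
    else ∅ with hExt
  set T : Fin k → Set (Wt b) := fun i => {Wt.U, Wt.Vv} ∪ Ext i with hT
  set S : Set (Fin k × Wt b) := {p | p.2 ∈ T p.1} with hS
  have memS : ∀ i (x : Wt b), x ∈ T i → (i, x) ∈ S := fun i x h => h
  have hni' : NoIsolatedVerts H := fun p => ⟨nb p, hnb p⟩
  have hUV : ∀ i, (i, Wt.U) ∈ S ∧ (i, Wt.Vv) ∈ S := fun i =>
    ⟨memS i _ (Or.inl (Or.inl rfl)), memS i _ (Or.inl (Or.inr rfl))⟩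
  have hTDS : IsTotalDominatingSet H S := by
    rintro ⟨i, x⟩
    cases x with
    | LU => exact ⟨(i, Wt.U), (hUV i).1, keyLU hni' i⟩
    | LV => exact ⟨(i, Wt.Vv), (hUV i).2, keyLV hni' i⟩
    | W j =>
      rcases keyW hni' i j with h | h
      · exact ⟨(i, Wt.U), (hUV i).1, h⟩
      · exact ⟨(i, Wt.Vv), (hUV i).2, h⟩
    | U =>
      by_cases hA : uvE i ∈ F
      · by_cases hB : ∃ j, uwE i j ∉ F ∧ vwE i j ∉ F
        · refine ⟨(i, Wt.W hB.choose), ?_, ?_⟩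
          · refine memS i _ (Or.inr ?_)
            rw [hExt]
            simp only [if_pos hA, dif_pos hB]
            rfl
          · exact (SimpleGraph.deleteEdges_adj ..).mpr ⟨⟨rfl, trivial⟩, hB.choose_spec.1⟩
        · refine ⟨nb (i, Wt.U), ?_, hnb (i, Wt.U)⟩
          have hfst : i = (nb (i, Wt.U)).1 := ((SimpleGraph.deleteEdges_adj ..).mp
            (hnb (i, Wt.U))).1.1
          have : (nb (i, Wt.U)).2 ∈ T i := by
            refine Or.inr ?_
            rw [hExt]
            simp only [if_pos hA, dif_neg hB]
            exact Or.inl rfl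
          show (nb (i, Wt.U)).2 ∈ T (nb (i, Wt.U)).1
          rwa [← hfst]
      · exact ⟨(i, Wt.Vv), (hUV i).2,
          (SimpleGraph.deleteEdges_adj ..).mpr ⟨⟨rfl, trivial⟩, hA⟩⟩
    | Vv =>
      by_cases hA : uvE i ∈ F
      · by_cases hB : ∃ j, uwE i j ∉ F ∧ vwE i j ∉ F
        · refine ⟨(i, Wt.W hB.choose), ?_, ?_⟩
          · refine memS i _ (Or.inr ?_)
            rw [hExt]
            simp only [if_pos hA, dif_pos hB]
            rfl
          · exact (SimpleGraph.deleteEdges_adj ..).mpr ⟨⟨rfl, trivial⟩, hB.choose_spec.2⟩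
        · refine ⟨nb (i, Wt.Vv), ?_, hnb (i, Wt.Vv)⟩
          have hfst : i = (nb (i, Wt.Vv)).1 := ((SimpleGraph.deleteEdges_adj ..).mp
            (hnb (i, Wt.Vv))).1.1
          have : (nb (i, Wt.Vv)).2 ∈ T i := by
            refine Or.inr ?_
            rw [hExt]
            simp only [if_pos hA, dif_neg hB]
            exact Or.inr rfl
          show (nb (i, Wt.Vv)).2 ∈ T (nb (i, Wt.Vv)).1
          rwa [← hfst]
      · have huv : s((i, Wt.Vv), (i, Wt.U)) ∉ F := by rwa [Sym2.eq_swap]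
        exact ⟨(i, Wt.U), (hUV i).1,
          (SimpleGraph.deleteEdges_adj ..).mpr ⟨⟨rfl, trivial⟩, huv⟩⟩
  refine le_trans (tdn_le _ hTDS) ?_
  have hfib : S.ncard = ∑ i : Fin k, (T i).ncard := by
    rw [ncard_fibers]
    exact Finset.sum_congr rfl fun i _ => rfl
  rw [hfib]
  have hbound : ∀ i, (T i).ncard ≤
      2 + ((if i ∈ Aset F then 1 else 0) + (if i ∈ Aset F ∩ Bset (k := k) F then 1 else 0)) := by
    intro i
    refine le_trans (Set.ncard_union_le _ _) ?_
    have h2 : ({Wt.U, Wt.Vv} : Set (Wt b)).ncard = 2 :=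
      Set.ncard_pair (fun h => nomatch h)
    rw [h2]
    gcongr
    by_cases hA : uvE i ∈ F
    · by_cases hB : ∃ j, uwE i j ∉ F ∧ vwE i j ∉ F
      · have hiA : i ∈ Aset (b := b) F := mem_Aset.mpr hA
        have : Ext i = {Wt.W hB.choose} := by rw [hExt]; simp only [if_pos hA, dif_pos hB]
        rw [this, Set.ncard_singleton, if_pos hiA]
        omega
      · have hiA : i ∈ Aset (b := b) F := mem_Aset.mpr hA
        have hiB : i ∈ Bset (k := k) F := by
          rw [mem_Bset]
          intro j
          by_contra hc
          push_neg at hc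
          exact hB ⟨j, hc.1, hc.2⟩
        have : Ext i = {(nb (i, Wt.U)).2, (nb (i, Wt.Vv)).2} := by
          rw [hExt]; simp only [if_pos hA, dif_neg hB]
        rw [this, if_pos hiA, if_pos (Finset.mem_inter.mpr ⟨hiA, hiB⟩)]
        refine le_trans (Set.ncard_insert_le _ _) ?_
        simp
    · have : Ext i = ∅ := by rw [hExt]; simp only [if_neg hA]
      rw [this, Set.ncard_empty]
      omega
  refine le_trans (Finset.sum_le_sum fun i _ => hbound i) ?_
  rw [Finset.sum_add_distrib, Finset.sum_add_distrib, Finset.sum_const]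
  simp only [Finset.sum_ite_mem, Finset.univ_inter, Finset.sum_const, smul_eq_mul, mul_one,
    Finset.card_univ, Fintype.card_fin]
  omega

noncomputable def cpy (e : Sym2 (Fin k × Wt b)) : Fin k := (Quot.out e).1.1

lemma cpy_mk (i : Fin k) (x y : Wt b) : cpy (s((i, x), (i, y))) = i := by
  have h := Sym2.out_fst_mem (s((i, x), (i, y)))
  rw [Sym2.mem_iff] at h
  rcases h with h | h <;> simp [cpy, h]

lemma le_F_ncard : (Aset F).card + b * (Bset (k := k) F).card ≤ F.ncard := by
  classical
  rw [ncard_eq_sum_fiberwise F (Set.toFinite F) cpy]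
  have key : ∀ i : Fin k, (if i ∈ Aset F then 1 else 0) + (if i ∈ Bset (k := k) F then b else 0)
      ≤ (F ∩ cpy ⁻¹' {i}).ncard := by
    intro i
    set g : Fin b → Sym2 (Fin k × Wt b) := fun j => if uwE i j ∈ F then uwE i j else vwE i j
      with hg
    have hcases : ∀ j, g j = uwE i j ∨ g j = vwE i j := by
      intro j
      by_cases hj : uwE i j ∈ F
      · exact Or.inl (if_pos hj)
      · exact Or.inr (if_neg hj)
    have hgmem : ∀ j, (i, Wt.W j) ∈ g j := by
      intro j
      rcases hcases j with he | he <;> rw [he]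
      · exact Sym2.mem_mk_right _ _
      · exact Sym2.mem_mk_right _ _
    have hginj : Function.Injective g := by
      intro j j' h
      have hmem : (i, Wt.W j) ∈ g j' := h ▸ hgmem j
      rcases hcases j' with he | he <;> rw [he] at hmem <;>
        simp only [uwE, vwE, Sym2.mem_iff] at hmem <;> rcases hmem with h2 | h2
      · exact absurd h2 (by simp [uwE])
      · simpa [uwE] using h2
      · exact absurd h2 (by simp [vwE])
      · simpa [vwE] using h2
    have hgF : ∀ j, i ∈ Bset (k := k) F → g j ∈ F ∩ cpy ⁻¹' {i} := by
      intro j hB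
      show (if uwE i j ∈ F then uwE i j else vwE i j) ∈ _
      split_ifs with hj
      · exact ⟨hj, cpy_mk i _ _⟩
      · exact ⟨(mem_Bset.mp hB j).resolve_left hj, cpy_mk i _ _⟩
    have huvF : i ∈ Aset (b := b) F → uvE i ∈ F ∩ cpy ⁻¹' {i} := by
      intro hA
      exact ⟨mem_Aset.mp hA, cpy_mk i _ _⟩
    have hrange : (Set.range g).ncard = b := by
      rw [ncard_range_of_injective hginj, Fintype.card_fin]
    by_cases hA : i ∈ Aset (b := b) F <;> by_cases hB : i ∈ Bset (k := k) F
    · rw [if_pos hA, if_pos hB]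
      have hnm : uvE i ∉ Set.range g := by
        rintro ⟨j, hj⟩
        have := hgmem j
        rw [hj] at this
        simp only [uvE, Sym2.mem_iff, Prod.mk.injEq] at this
        rcases this with ⟨-, h2⟩ | ⟨-, h2⟩ <;> exact nomatch h2
      have hsub : insert (uvE i) (Set.range g) ⊆ F ∩ cpy ⁻¹' {i} := by
        rintro e (rfl | ⟨j, rfl⟩)
        · exact huvF hA
        · exact hgF j hB
      calc 1 + b = (insert (uvE i) (Set.range g)).ncard := by
            rw [Set.ncard_insert_of_notMem hnm (Set.toFinite _), hrange, add_comm]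
        _ ≤ _ := Set.ncard_le_ncard hsub (Set.toFinite _)
    · rw [if_pos hA, if_neg hB, add_zero]
      calc 1 = ({uvE i} : Set _).ncard := (Set.ncard_singleton _).symm
        _ ≤ _ := Set.ncard_le_ncard (by simpa using huvF hA) (Set.toFinite _)
    · rw [if_neg hA, if_pos hB, zero_add]
      calc b = (Set.range g).ncard := hrange.symm
        _ ≤ _ := Set.ncard_le_ncard (by rintro e ⟨j, rfl⟩; exact hgF j hB) (Set.toFinite _)
    · rw [if_neg hA, if_neg hB]
      simp
  refine le_trans (le_of_eq ?_) (Finset.sum_le_sum fun i _ => key i)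
  rw [Finset.sum_add_distrib]
  simp only [Finset.sum_ite_mem, Finset.univ_inter, Finset.sum_const, smul_eq_mul, mul_one]
  rw [mul_comm]

noncomputable def F1 (k b : ℕ) : Set (Sym2 (Fin k × Wt b)) := Set.range (uvE (b := b))

noncomputable def F2 (k b : ℕ) (hk : 1 ≤ k) : Set (Sym2 (Fin k × Wt b)) :=
  F1 k b ∪ Set.range (uwE (⟨0, hk⟩ : Fin k))

lemma F1_sub : F1 k b ⊆ (Gr k b).edgeSet := by
  rintro e ⟨i, rfl⟩
  exact ⟨rfl, trivial⟩

lemma uvE_inj : Function.Injective (uvE (k := k) (b := b)) := by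
  intro i i' h
  have : ((i, Wt.U) : Fin k × Wt b) ∈ uvE i' := h ▸ Sym2.mem_mk_left _ _
  rw [uvE, Sym2.mem_iff] at this
  rcases this with h2 | h2
  · exact congrArg Prod.fst h2
  · exact absurd (congrArg Prod.snd h2) (by simp)

lemma uwE_inj (i : Fin k) : Function.Injective (uwE (b := b) i) := by
  intro j j' h
  have : ((i, Wt.W j) : Fin k × Wt b) ∈ uwE i j' := h ▸ Sym2.mem_mk_right _ _
  rw [uwE, Sym2.mem_iff] at this
  rcases this with h2 | h2
  · exact absurd (congrArg Prod.snd h2) (by simp)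
  · simpa using congrArg Prod.snd h2

lemma F1_ncard : (F1 k b).ncard = k := by
  rw [F1, ncard_range_of_injective uvE_inj, Fintype.card_fin]

lemma not_mem_F1 {p q : Fin k × Wt b} (hp : p.2 ≠ Wt.U ∧ p.2 ≠ Wt.Vv) :
    s(p, q) ∉ F1 k b := by
  rintro ⟨i, hi⟩
  rw [uvE, Sym2.eq_iff] at hi
  rcases hi with ⟨h1, -⟩ | ⟨-, h2⟩
  · exact hp.1 (congrArg Prod.snd h1.symm)
  · exact hp.2 (congrArg Prod.snd h2.symm)

lemma not_mem_uw_range {i0 : Fin k} {p q : Fin k × Wt b}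
    (hp : p.2 ≠ Wt.U ∧ ∀ j, p.2 ≠ Wt.W j) : s(p, q) ∉ Set.range (uwE i0) := by
  rintro ⟨j, hj⟩
  rw [uwE, Sym2.eq_iff] at hj
  rcases hj with ⟨h1, -⟩ | ⟨-, h2⟩
  · exact hp.1 (congrArg Prod.snd h1.symm)
  · exact hp.2 j (congrArg Prod.snd h2.symm)

lemma F2_ncard (hk : 1 ≤ k) : (F2 k b hk).ncard = k + b := by
  rw [F2, Set.ncard_union_eq ?disj (Set.toFinite _) (Set.toFinite _),
    F1_ncard, ncard_range_of_injective (uwE_inj _), Fintype.card_fin]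
  case disj =>
    rw [Set.disjoint_left]
    rintro e ⟨i, rfl⟩ ⟨j, hj⟩
    have : ((⟨0, hk⟩ : Fin k), Wt.W j) ∈ uvE i := hj ▸ Sym2.mem_mk_right _ _
    rw [uvE, Sym2.mem_iff] at this
    rcases this with h2 | h2 <;> exact absurd (congrArg Prod.snd h2) (by simp)

lemma F2_sub (hk : 1 ≤ k) : F2 k b hk ⊆ (Gr k b).edgeSet := by
  rintro e (⟨i, rfl⟩ | ⟨j, rfl⟩)
  · exact ⟨rfl, trivial⟩
  · exact ⟨rfl, trivial⟩

lemma noiso_F1 : NoIsolatedVerts ((Gr k b).deleteEdges (F1 k b)) := by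
  rintro ⟨i, x⟩
  cases x with
  | U => exact ⟨(i, Wt.LU), (SimpleGraph.deleteEdges_adj ..).mpr
      ⟨⟨rfl, trivial⟩, by rw [Sym2.eq_swap]; exact not_mem_F1 (by simp)⟩⟩
  | Vv => exact ⟨(i, Wt.LV), (SimpleGraph.deleteEdges_adj ..).mpr
      ⟨⟨rfl, trivial⟩, by rw [Sym2.eq_swap]; exact not_mem_F1 (by simp)⟩⟩
  | LU => exact ⟨(i, Wt.U), (SimpleGraph.deleteEdges_adj ..).mpr
      ⟨⟨rfl, trivial⟩, not_mem_F1 (by simp)⟩⟩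
  | LV => exact ⟨(i, Wt.Vv), (SimpleGraph.deleteEdges_adj ..).mpr
      ⟨⟨rfl, trivial⟩, not_mem_F1 (by simp)⟩⟩
  | W j => exact ⟨(i, Wt.U), (SimpleGraph.deleteEdges_adj ..).mpr
      ⟨⟨rfl, trivial⟩, not_mem_F1 (by simp)⟩⟩

lemma noiso_F2 (hk : 1 ≤ k) : NoIsolatedVerts ((Gr k b).deleteEdges (F2 k b hk)) := by
  have notmem : ∀ {p q : Fin k × Wt b}, (p.2 ≠ Wt.U ∧ p.2 ≠ Wt.Vv) →
      (∀ j, p.2 ≠ Wt.W j) → s(p, q) ∉ F2 k b hk := by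
    intro p q h1 h2 hmem
    rcases hmem with hm | hm
    · exact not_mem_F1 h1 hm
    · exact not_mem_uw_range ⟨h1.1, h2⟩ hm
  rintro ⟨i, x⟩
  cases x with
  | U => exact ⟨(i, Wt.LU), (SimpleGraph.deleteEdges_adj ..).mpr
      ⟨⟨rfl, trivial⟩, by rw [Sym2.eq_swap]; exact notmem (by simp) (by simp)⟩⟩
  | Vv => exact ⟨(i, Wt.LV), (SimpleGraph.deleteEdges_adj ..).mpr
      ⟨⟨rfl, trivial⟩, by rw [Sym2.eq_swap]; exact notmem (by simp) (by simp)⟩⟩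
  | LU => exact ⟨(i, Wt.U), (SimpleGraph.deleteEdges_adj ..).mpr
      ⟨⟨rfl, trivial⟩, notmem (by simp) (by simp)⟩⟩
  | LV => exact ⟨(i, Wt.Vv), (SimpleGraph.deleteEdges_adj ..).mpr
      ⟨⟨rfl, trivial⟩, notmem (by simp) (by simp)⟩⟩
  | W j =>
    refine ⟨(i, Wt.Vv), (SimpleGraph.deleteEdges_adj ..).mpr ⟨⟨rfl, trivial⟩, ?_⟩⟩
    rintro (hm | hm)
    · exact not_mem_F1 (by simp) hm
    · rw [Sym2.eq_swap] at hm
      exact not_mem_uw_range ⟨by simp, by simp⟩ hm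

lemma three_le_ncard {y : Wt b} (h1 : y ≠ Wt.U) (h2 : y ≠ Wt.Vv) {S' : Set (Wt b)}
    (hU : Wt.U ∈ S') (hV : Wt.Vv ∈ S') (hy : y ∈ S') : 3 ≤ S'.ncard := by
  have hsub : ({Wt.U, Wt.Vv, y} : Set (Wt b)) ⊆ S' := by
    rintro x (rfl | rfl | rfl) <;> assumption
  refine le_trans (le_of_eq ?_) (Set.ncard_le_ncard hsub (Set.toFinite _))
  rw [Set.ncard_insert_of_notMem ?h (Set.toFinite _), Set.ncard_pair h2.symm]
  case h =>
    rintro (h | h)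
    · exact nomatch h
    · exact h1 h.symm

lemma four_le_ncard {y : Wt b} (h1 : y ≠ Wt.U) (h2 : y ≠ Wt.Vv) (h3 : y ≠ Wt.LU)
    {S' : Set (Wt b)} (hU : Wt.U ∈ S') (hV : Wt.Vv ∈ S') (hLU : Wt.LU ∈ S')
    (hy : y ∈ S') : 4 ≤ S'.ncard := by
  have hsub : ({Wt.U, Wt.Vv, Wt.LU, y} : Set (Wt b)) ⊆ S' := by
    rintro x (rfl | rfl | rfl | rfl) <;> assumption
  refine le_trans (le_of_eq ?_) (Set.ncard_le_ncard hsub (Set.toFinite _))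
  rw [Set.ncard_insert_of_notMem ?ha (Set.toFinite _),
    Set.ncard_insert_of_notMem ?hb (Set.toFinite _), Set.ncard_pair h3.symm]
  case ha =>
    rintro (h | h | h)
    · exact nomatch h
    · exact nomatch h
    · exact h1 h.symm
  case hb =>
    rintro (h | h)
    · exact nomatch h
    · exact h2 h.symm

lemma tdn_F1_ge : 2 * k + k ≤ totalDominationNumber ((Gr k b).deleteEdges (F1 k b)) := by
  refine le_tdn _ noiso_F1 ?_
  intro S hS
  rw [ncard_fibers]
  have hper : ∀ i : Fin k, 3 ≤ {x : Wt b | (i, x) ∈ S}.ncard := by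
    intro i
    have hUV := uv_mem_of_tds (SimpleGraph.deleteEdges_le _) hS i
    obtain ⟨q, hqS, hadj⟩ := hS (i, Wt.U)
    obtain ⟨⟨hfst, hw⟩, hnF⟩ := (SimpleGraph.deleteEdges_adj ..).mp hadj
    obtain ⟨i', y⟩ := q
    cases hfst
    have hyU : y ≠ Wt.U := by rintro rfl; exact hw
    have hyV : y ≠ Wt.Vv := by rintro rfl; exact hnF ⟨i, rfl⟩
    exact three_le_ncard hyU hyV hUV.1 hUV.2 hqS
  calc 2 * k + k = ∑ _i : Fin k, 3 := by
        rw [Finset.sum_const, Finset.card_univ, Fintype.card_fin, smul_eq_mul]; ring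
    _ ≤ _ := Finset.sum_le_sum fun i _ => hper i

lemma tdn_F2_ge (hk : 1 ≤ k) :
    2 * k + (k + 1) ≤ totalDominationNumber ((Gr k b).deleteEdges (F2 k b hk)) := by
  refine le_tdn _ (noiso_F2 hk) ?_
  intro S hS
  rw [ncard_fibers]
  have hper : ∀ i : Fin k, 3 ≤ {x : Wt b | (i, x) ∈ S}.ncard := by
    intro i
    have hUV := uv_mem_of_tds (SimpleGraph.deleteEdges_le _) hS i
    obtain ⟨q, hqS, hadj⟩ := hS (i, Wt.U)
    obtain ⟨⟨hfst, hw⟩, hnF⟩ := (SimpleGraph.deleteEdges_adj ..).mp hadj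
    obtain ⟨i', y⟩ := q
    cases hfst
    have hyU : y ≠ Wt.U := by rintro rfl; exact hw
    have hyV : y ≠ Wt.Vv := by rintro rfl; exact hnF (Or.inl ⟨i, rfl⟩)
    exact three_le_ncard hyU hyV hUV.1 hUV.2 hqS
  have hper0 : 4 ≤ {x : Wt b | ((⟨0, hk⟩ : Fin k), x) ∈ S}.ncard := by
    set i0 : Fin k := ⟨0, hk⟩ with hi0
    have hUV := uv_mem_of_tds (SimpleGraph.deleteEdges_le _) hS i0
    -- the neighbor of (i0, U) must be LU
    have hLU : Wt.LU ∈ {x : Wt b | (i0, x) ∈ S} := by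
      obtain ⟨q, hqS, hadj⟩ := hS (i0, Wt.U)
      obtain ⟨⟨hfst, hw⟩, hnF⟩ := (SimpleGraph.deleteEdges_adj ..).mp hadj
      obtain ⟨i', y⟩ := q
      cases hfst
      rcases adjW_u_right hw with h | h | ⟨j, h⟩
      · have hy : y = Wt.Vv := h
        subst hy
        exact absurd (Or.inl ⟨i0, rfl⟩) hnF
      · have hy : y = Wt.LU := h
        subst hy
        exact hqS
      · have hy : y = Wt.W j := h
        subst hy
        exact absurd (Or.inr ⟨j, rfl⟩) hnF
    -- the neighbor of (i0, Vv) gives a fourth vertex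
    obtain ⟨q, hqS, hadj⟩ := hS (i0, Wt.Vv)
    obtain ⟨⟨hfst, hw⟩, hnF⟩ := (SimpleGraph.deleteEdges_adj ..).mp hadj
    obtain ⟨i', y⟩ := q
    cases hfst
    have hyV : y ≠ Wt.Vv := by rintro rfl; exact hw
    have hyU : y ≠ Wt.U := by
      rintro rfl
      exact hnF (Or.inl ⟨i0, by rw [uvE, Sym2.eq_swap]⟩)
    have hyLU : y ≠ Wt.LU := by rintro rfl; exact hw
    exact four_le_ncard hyU hyV hyLU hUV.1 hUV.2 hLU hqS
  calc 2 * k + (k + 1) = ∑ i : Fin k, (3 + if i = ⟨0, hk⟩ then 1 else 0) := by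
        rw [Finset.sum_add_distrib, Finset.sum_const, Finset.card_univ, Fintype.card_fin,
          smul_eq_mul, Finset.sum_ite_eq' Finset.univ (⟨0, hk⟩ : Fin k) (fun _ => 1)]
        simp; ring
    _ ≤ _ := by
        refine Finset.sum_le_sum fun i _ => ?_
        by_cases hi : i = ⟨0, hk⟩
        · subst hi; rw [if_pos rfl]; exact hper0
        · rw [if_neg hi]; exact le_trans (by omega) (hper i)

lemma bondage_k_eq (hk : 1 ≤ k) (hb : 1 ≤ b) : kTotalBondage (Gr k b) k = k := by
  have hmem : k ∈ {m : ℕ | ∃ F : Set (Sym2 (Fin k × Wt b)), F ⊆ (Gr k b).edgeSet ∧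
      F.ncard = m ∧ NoIsolatedVerts ((Gr k b).deleteEdges F) ∧
      totalDominationNumber (Gr k b) + k ≤ totalDominationNumber ((Gr k b).deleteEdges F)} :=
    ⟨F1 k b, F1_sub, F1_ncard, noiso_F1, by rw [tdn_gr]; exact tdn_F1_ge⟩
  refine le_antisymm (Nat.sInf_le hmem) (le_csInf ⟨k, hmem⟩ ?_)
  rintro m ⟨F, hsub, rfl, hni, hge⟩
  rw [tdn_gr] at hge
  have h1 := tdn_delete_le (F := F) hni
  have h2 := le_F_ncard (F := F)
  have h3 : (Aset F ∩ Bset (k := k) F).card ≤ (Bset (k := k) F).card :=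
    Finset.card_le_card Finset.inter_subset_right
  have h5 : (Bset (k := k) F).card ≤ b * (Bset (k := k) F).card :=
    Nat.le_mul_of_pos_left _ hb
  omega

lemma bondage_k1_eq (hk : 1 ≤ k) (hb : 1 ≤ b) : kTotalBondage (Gr k b) (k + 1) = k + b := by
  have hmem : k + b ∈ {m : ℕ | ∃ F : Set (Sym2 (Fin k × Wt b)), F ⊆ (Gr k b).edgeSet ∧
      F.ncard = m ∧ NoIsolatedVerts ((Gr k b).deleteEdges F) ∧
      totalDominationNumber (Gr k b) + (k + 1) ≤
        totalDominationNumber ((Gr k b).deleteEdges F)} :=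
    ⟨F2 k b hk, F2_sub hk, F2_ncard hk, noiso_F2 hk, by rw [tdn_gr]; exact tdn_F2_ge hk⟩
  refine le_antisymm (Nat.sInf_le hmem) (le_csInf ⟨k + b, hmem⟩ ?_)
  rintro m ⟨F, hsub, rfl, hni, hge⟩
  rw [tdn_gr] at hge
  have h1 := tdn_delete_le (F := F) hni
  have h2 := le_F_ncard (F := F)
  have h3 : (Aset F ∩ Bset (k := k) F).card ≤ (Bset (k := k) F).card :=
    Finset.card_le_card Finset.inter_subset_right
  have hA : (Aset (b := b) F).card ≤ k := by
    have h := Finset.card_le_univ (Aset (b := b) F)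
    simpa using h
  have hB1 : 1 ≤ (Bset (k := k) F).card := by omega
  obtain ⟨B', hB'⟩ := Nat.exists_eq_succ_of_ne_zero (Nat.one_le_iff_ne_zero.mp hB1)
  have hmul : B' ≤ b * B' := Nat.le_mul_of_pos_left _ hb
  have heq : b * (Bset (k := k) F).card = b * B' + b := by rw [hB', Nat.mul_succ]
  have h3' : (Aset F ∩ Bset (k := k) F).card ≤ B' + 1 := by omega
  omega

theorem exists_graph_kTotalBondage_succ_eq_add' (k b : ℕ) (hk : 1 ≤ k)
    (hb : 1 ≤ b) :
    ∃ (V : Type) (_ : Fintype V) (G : SimpleGraph V),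
      NoIsolatedVerts G ∧
      (∃ F : Set (Sym2 V), F ⊆ G.edgeSet ∧
        NoIsolatedVerts (G.deleteEdges F) ∧
        totalDominationNumber G + k ≤ totalDominationNumber (G.deleteEdges F)) ∧
      (∃ F : Set (Sym2 V), F ⊆ G.edgeSet ∧
        NoIsolatedVerts (G.deleteEdges F) ∧
        totalDominationNumber G + (k + 1) ≤
          totalDominationNumber (G.deleteEdges F)) ∧
      kTotalBondage G (k + 1) = kTotalBondage G k + b := by
  refine ⟨Fin k × Wt b, inferInstance, Gr k b, gr_no_isolated, ?_, ?_, ?_⟩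
  · exact ⟨F1 k b, F1_sub, noiso_F1, by rw [tdn_gr]; exact tdn_F1_ge⟩
  · exact ⟨F2 k b hk, F2_sub hk, noiso_F2 hk, by rw [tdn_gr]; exact tdn_F2_ge hk⟩
  · rw [bondage_k1_eq hk hb, bondage_k_eq hk hb]

/-- For any positive integers `k` and `b`, there exists a finite graph `G` with
no isolated vertices such that `b_t^k(G)` and `b_t^{k+1}(G)` exist and
`b_t^{k+1}(G) = b_t^k(G) + b`. -/
theorem exists_graph_kTotalBondage_succ_eq_add (k b : ℕ) (hk : 1 ≤ k)
    (hb : 1 ≤ b) :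
    ∃ (V : Type) (_ : Fintype V) (G : SimpleGraph V),
      NoIsolatedVerts G ∧
      (∃ F : Set (Sym2 V), F ⊆ G.edgeSet ∧
        NoIsolatedVerts (G.deleteEdges F) ∧
        totalDominationNumber G + k ≤ totalDominationNumber (G.deleteEdges F)) ∧
      (∃ F : Set (Sym2 V), F ⊆ G.edgeSet ∧
        NoIsolatedVerts (G.deleteEdges F) ∧
        totalDominationNumber G + (k + 1) ≤
          totalDominationNumber (G.deleteEdges F)) ∧
      kTotalBondage G (k + 1) = kTotalBondage G k + b := by
  exact exists_graph_kTotalBondage_succ_eq_add' k b hk hb
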